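/- Let τ be an involution of Q, V a τ-symmetric representation with α = τ·α, σ = −τ·σ a weight, and W the minimal witness of (V,σ), with W ⊆ W^⊥ (τ-isotropic). Then Hom_Q(W, W^⊥/W) = 0 and Hom_Q(W, V/W^⊥) = 0. -/

import Mathlib

open Module

/-- A family of subspaces `W x ⊆ ℂ^{α x}` is a subrepresentation of the
representation `M` of the quiver with vertices `Vt`, arrows `At`,
head map `hd`, tail map `tl`, if it is stable under all arrow maps. -/
def IsSubrep {Vt At : Type} (hd tl : At → Vt) (α : Vt → ℕ)
    (M : ∀ a : At, Matrix (Fin (α (hd a))) (Fin (α (tl a))) ℂ)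
    (W : ∀ x : Vt, Submodule ℂ (Fin (α x) → ℂ)) : Prop :=
  ∀ a : At, ∀ v ∈ W (tl a), (M a).mulVec v ∈ W (hd a)

/-- `σ(dim W) = ∑ x σ(x) dim W(x)`. -/
noncomputable def sval {Vt : Type} [Fintype Vt] (α : Vt → ℕ) (σ : Vt → ℤ)
    (W : ∀ x : Vt, Submodule ℂ (Fin (α x) → ℂ)) : ℤ :=
  ∑ x, σ x * (Module.finrank ℂ (W x) : ℤ)

/-- A witness of `(V,σ)` : a subrepresentation maximizing `σ(dim ·)`
(i.e. attaining the discrepancy). -/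
def IsWitness {Vt At : Type} [Fintype Vt] (hd tl : At → Vt) (α : Vt → ℕ)
    (M : ∀ a : At, Matrix (Fin (α (hd a))) (Fin (α (tl a))) ℂ) (σ : Vt → ℤ)
    (W : ∀ x : Vt, Submodule ℂ (Fin (α x) → ℂ)) : Prop :=
  IsSubrep hd tl α M W ∧
    ∀ W', IsSubrep hd tl α M W' → sval α σ W' ≤ sval α σ W

/-- `M` is `τ`-symmetric: `M(a) = M(τa)*` (conjugate transpose), entrywise. -/
def TauSymm {Vt At : Type} (hd tl : At → Vt) (α : Vt → ℕ)
    (τ₀ : Vt → Vt) (τ₁ : At → At)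
    (hh : ∀ a, hd (τ₁ a) = τ₀ (tl a)) (ht : ∀ a, tl (τ₁ a) = τ₀ (hd a))
    (hα : ∀ x, α (τ₀ x) = α x)
    (M : ∀ a : At, Matrix (Fin (α (hd a))) (Fin (α (tl a))) ℂ) : Prop :=
  ∀ a : At, ∀ (i : Fin (α (hd a))) (j : Fin (α (tl a))),
    M a i j =
      star (M (τ₁ a)
        (Fin.cast (((congrArg α (hh a)).trans (hα (tl a))).symm) j)
        (Fin.cast (((congrArg α (ht a)).trans (hα (hd a))).symm) i))

/-- Orthogonal complement of `W ⊆ ℂ^m` for the standard Hermitian product,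
viewed in `ℂ^n` along an equality `m = n`. -/
noncomputable def perp {m n : ℕ} (h : m = n) (W : Submodule ℂ (Fin m → ℂ)) :
    Submodule ℂ (Fin n → ℂ) where
  carrier := {v | ∀ w ∈ W, ∑ i : Fin m, star (w i) * v (Fin.cast h i) = 0}
  zero_mem' := by intro w hw; simp
  add_mem' := by
    intro a b ha hb w hw
    have h1 := ha w hw
    have h2 := hb w hw
    simp only [Pi.add_apply, mul_add, Finset.sum_add_distrib, h1, h2, add_zero]
  smul_mem' := by
    intro c v hv w hw
    have h0 := hv w hw
    calc ∑ i : Fin m, star (w i) * (c • v) (Fin.cast h i)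
        = c * ∑ i : Fin m, star (w i) * v (Fin.cast h i) := by
          rw [Finset.mul_sum]
          exact Finset.sum_congr rfl (fun i _ => by
            simp only [Pi.smul_apply, smul_eq_mul]; ring)
      _ = 0 := by rw [h0, mul_zero]


lemma finrank_perp_add {m n : ℕ} (h : m = n) (W : Submodule ℂ (Fin m → ℂ)) :
    finrank ℂ (perp h W) + finrank ℂ W = n := by
  subst h
  let L := (WithLp.linearEquiv 2 ℂ (Fin m → ℂ)).symm
  have hperp : perp rfl W = (W.comap L.symm.toLinearMap).orthogonal.map L.symm.toLinearMap := by
    ext v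
    constructor
    · intro hv
      refine ⟨L v, ?_, rfl⟩
      intro u hu
      have := hv (L.symm u) hu
      simpa [EuclideanSpace.inner_eq_star_dotProduct, dotProduct, mul_comm, L] using this
    · rintro ⟨u, hu, rfl⟩
      intro w hw
      have := hu (L w) (by simpa using hw)
      simpa [EuclideanSpace.inner_eq_star_dotProduct, dotProduct, mul_comm, L] using this
  rw [hperp]
  rw [LinearEquiv.finrank_map_eq L.symm]
  have h2 : finrank ℂ (W.comap L.symm.toLinearMap) = finrank ℂ W := by
    rw [Submodule.comap_equiv_eq_map_symm]; exact LinearEquiv.finrank_map_eq _ _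
  have h3 := Submodule.finrank_add_finrank_orthogonal (K := W.comap L.symm.toLinearMap)
  have h4 : finrank ℂ (WithLp 2 (Fin m → ℂ)) = m := by
    simpa using finrank_euclideanSpace_fin (𝕜 := ℂ) (n := m)
  omega

lemma sum_tau_reindex {Vt : Type} [Fintype Vt] (τ₀ : Vt → Vt)
    (hτ₀ : ∀ x, τ₀ (τ₀ x) = x) (f : Vt → ℤ) :
    ∑ x, f (τ₀ x) = ∑ x, f x :=
  Fintype.sum_equiv (Function.Involutive.toPerm τ₀ hτ₀) _ _ (fun _ => rfl)

lemma finrank_comap_mkQ {K V : Type*} [Field K] [AddCommGroup V] [Module K V]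
    [FiniteDimensional K V] (p : Submodule K V) (T : Submodule K (V ⧸ p)) :
    finrank K (T.comap p.mkQ) = finrank K p + finrank K T := by
  set g : (T.comap p.mkQ) →ₗ[K] V ⧸ p := p.mkQ.comp (T.comap p.mkQ).subtype with hg
  have hker : LinearMap.ker g = Submodule.comap (T.comap p.mkQ).subtype p := by
    rw [hg, LinearMap.ker_comp, Submodule.ker_mkQ]
  have hrange : LinearMap.range g = T := by
    rw [hg, LinearMap.range_comp, Submodule.range_subtype,
      Submodule.map_comap_eq, Submodule.range_mkQ, top_inf_eq]
  have hple : p ≤ T.comap p.mkQ := by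
    intro u hu
    show p.mkQ u ∈ T
    have hz : p.mkQ u = 0 := (Submodule.Quotient.mk_eq_zero _).2 hu
    rw [hz]; exact zero_mem _
  have hrn := LinearMap.finrank_range_add_finrank_ker g
  have e1 : finrank K (LinearMap.ker g) = finrank K p := by
    rw [hker]; exact (Submodule.comapSubtypeEquivOfLe hple).finrank_eq
  have e2 : finrank K (LinearMap.range g) = finrank K T := by rw [hrange]
  omega

set_option maxHeartbeats 1000000 in
set_option synthInstance.maxHeartbeats 400000 in
/-- For a `τ`-symmetric representation `V` with `α = τ·α`, an anti-invariant
weight `σ = −τ·σ`, and `W` the minimal witness of `(V,σ)` (which is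
`τ`-isotropic: `W ⊆ W^⊥`), one has `Hom_Q(W, W^⊥/W) = 0` and
`Hom_Q(W, V/W^⊥) = 0`. -/
theorem hom_minimal_witness_isotropic_zero {Vt At : Type} [Fintype Vt] [Fintype At]
    (hd tl : At → Vt) (α : Vt → ℕ) (τ₀ : Vt → Vt) (τ₁ : At → At)
    (hτ₀ : ∀ x, τ₀ (τ₀ x) = x) (hτ₁ : ∀ a, τ₁ (τ₁ a) = a)
    (hh : ∀ a, hd (τ₁ a) = τ₀ (tl a)) (ht : ∀ a, tl (τ₁ a) = τ₀ (hd a))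
    (hα : ∀ x, α (τ₀ x) = α x)
    (M : ∀ a : At, Matrix (Fin (α (hd a))) (Fin (α (tl a))) ℂ)
    (hsym : TauSymm hd tl α τ₀ τ₁ hh ht hα M)
    (σ : Vt → ℤ) (hσ : ∀ x, σ (τ₀ x) = -σ x)
    (W : ∀ x : Vt, Submodule ℂ (Fin (α x) → ℂ))
    (hwit : IsWitness hd tl α M σ W)
    (hmin : ∀ W', IsWitness hd tl α M σ W' → ∀ x, W x ≤ W' x)
    (hiso : ∀ x, W x ≤ perp (hα x) (W (τ₀ x)))
    (hPsub : IsSubrep hd tl α M (fun x => perp (hα x) (W (τ₀ x)))) :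
    (∀ φ : ∀ x : Vt, W x →ₗ[ℂ]
        ((perp (hα x) (W (τ₀ x))) ⧸
          Submodule.comap (perp (hα x) (W (τ₀ x))).subtype (W x)),
      (∀ a : At, ∀ v : W (tl a),
        φ (hd a) ⟨(M a).mulVec v, hwit.1 a v v.2⟩ =
          Submodule.mapQ
            (Submodule.comap (perp (hα (tl a)) (W (τ₀ (tl a)))).subtype (W (tl a)))
            (Submodule.comap (perp (hα (hd a)) (W (τ₀ (hd a)))).subtype (W (hd a)))
            (LinearMap.restrict (M a).mulVecLin
              (p := perp (hα (tl a)) (W (τ₀ (tl a))))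
              (q := perp (hα (hd a)) (W (τ₀ (hd a))))
              (fun u hu => hPsub a u hu))
            (fun u hu => hwit.1 a u hu)
            (φ (tl a) v)) →
      ∀ x, φ x = 0) ∧
    (∀ ψ : ∀ x : Vt, W x →ₗ[ℂ]
        ((Fin (α x) → ℂ) ⧸ perp (hα x) (W (τ₀ x))),
      (∀ a : At, ∀ v : W (tl a),
        ψ (hd a) ⟨(M a).mulVec v, hwit.1 a v v.2⟩ =
          Submodule.mapQ (perp (hα (tl a)) (W (τ₀ (tl a))))
            (perp (hα (hd a)) (W (τ₀ (hd a)))) (M a).mulVecLin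
            (fun u hu => hPsub a u hu)
            (ψ (tl a) v)) →
      ∀ x, ψ x = 0) := by
  classical
  have hP : ∀ x, perp (hα x) (W (τ₀ x)) = perp (hα x) (W (τ₀ x)) := fun _ => rfl
  -- σ(α) = 0
  have hσα : ∑ x, σ x * (α x : ℤ) = 0 := by
    have h1 : ∑ x, σ (τ₀ x) * (α (τ₀ x) : ℤ) = ∑ x, σ x * (α x : ℤ) :=
      sum_tau_reindex τ₀ hτ₀ (fun x => σ x * (α x : ℤ))
    have h2 : ∀ x, σ (τ₀ x) * (α (τ₀ x) : ℤ) = -(σ x * (α x : ℤ)) := by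
      intro x; rw [hσ x, hα x]; ring
    rw [Finset.sum_congr rfl (fun x _ => h2 x), Finset.sum_neg_distrib] at h1
    omega
  -- sval of the perp family equals sval of W
  have hPrank : ∀ x, (finrank ℂ (perp (hα x) (W (τ₀ x))) : ℤ)
      = (α x : ℤ) - (finrank ℂ (W (τ₀ x)) : ℤ) := by
    intro x
    have h := finrank_perp_add (hα x) (W (τ₀ x))
    omega
  have hsvalP : sval α σ (fun x => perp (hα x) (W (τ₀ x))) = sval α σ W := by
    show (∑ x, σ x * (finrank ℂ (perp (hα x) (W (τ₀ x))) : ℤ)) = _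
    calc (∑ x, σ x * (finrank ℂ (perp (hα x) (W (τ₀ x))) : ℤ))
        = ∑ x, (σ x * (α x : ℤ) + σ (τ₀ x) * (finrank ℂ (W (τ₀ x)) : ℤ)) :=
          Finset.sum_congr rfl (fun x _ => by rw [hPrank x, hσ x]; ring)
      _ = (∑ x, σ x * (α x : ℤ)) + ∑ x, σ (τ₀ x) * (finrank ℂ (W (τ₀ x)) : ℤ) :=
          Finset.sum_add_distrib
      _ = sval α σ W := by
          rw [hσα, zero_add,
            sum_tau_reindex τ₀ hτ₀ (fun x => σ x * (finrank ℂ (W x) : ℤ))]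
          rfl
  constructor
  · -- Hom(W, W^⊥/W) = 0
    intro φ hcomm
    -- K = pointwise kernels, U = pointwise preimage of images inside W^⊥
    set K : ∀ x, Submodule ℂ (Fin (α x) → ℂ) :=
      fun x => Submodule.map (W x).subtype (LinearMap.ker (φ x)) with hK
    set C : ∀ x, Submodule ℂ (perp (hα x) (W (τ₀ x))) :=
      fun x => Submodule.comap
        (Submodule.comap (perp (hα x) (W (τ₀ x))).subtype (W x)).mkQ
        (LinearMap.range (φ x)) with hC
    set U : ∀ x, Submodule ℂ (Fin (α x) → ℂ) :=
      fun x => Submodule.map (perp (hα x) (W (τ₀ x))).subtype (C x) with hU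
    -- K is a subrepresentation
    have hKsub : IsSubrep hd tl α M K := by
      intro a v hv
      obtain ⟨u, hu, rfl⟩ := hv
      refine ⟨⟨(M a).mulVec u, hwit.1 a u u.2⟩, ?_, rfl⟩
      simp only [SetLike.mem_coe, LinearMap.mem_ker] at hu ⊢
      rw [hcomm a u, hu, map_zero]
    -- U is a subrepresentation
    have hUsub : IsSubrep hd tl α M U := by
      intro a v hv
      obtain ⟨c, hc, rfl⟩ := hv
      obtain ⟨w, hw⟩ := hc
      refine ⟨LinearMap.restrict (M a).mulVecLin
        (p := perp (hα (tl a)) (W (τ₀ (tl a))))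
        (q := perp (hα (hd a)) (W (τ₀ (hd a))))
        (fun u hu => hPsub a u hu) c, ?_, rfl⟩
      refine ⟨⟨(M a).mulVec w, hwit.1 a w w.2⟩, ?_⟩
      rw [hcomm a w, hw, Submodule.mkQ_apply, Submodule.mkQ_apply]
      rfl
    -- dimension of K
    have hKrank : ∀ x, (finrank ℂ (K x) : ℤ)
        = (finrank ℂ (W x) : ℤ) - (finrank ℂ (LinearMap.range (φ x)) : ℤ) := by
      intro x
      have h1 : finrank ℂ (K x) = finrank ℂ (LinearMap.ker (φ x)) :=
        Submodule.finrank_map_subtype_eq _ _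
      have h2 := LinearMap.finrank_range_add_finrank_ker (φ x)
      rw [h1]; omega
    -- dimension of U
    have hUrank : ∀ x, (finrank ℂ (U x) : ℤ)
        = (finrank ℂ (W x) : ℤ) + (finrank ℂ (LinearMap.range (φ x)) : ℤ) := by
      intro x
      have h1 : finrank ℂ (U x) = finrank ℂ (C x) :=
        Submodule.finrank_map_subtype_eq _ _
      have h2 : finrank ℂ (C x)
          = finrank ℂ (Submodule.comap (perp (hα x) (W (τ₀ x))).subtype (W x))
            + finrank ℂ (LinearMap.range (φ x)) :=
        finrank_comap_mkQ _ _
      have e2 : finrank ℂ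
            (Submodule.comap (perp (hα x) (W (τ₀ x))).subtype (W x))
          = finrank ℂ (W x) :=
        (Submodule.comapSubtypeEquivOfLe (hiso x)).finrank_eq
      rw [h1, h2, e2]; push_cast; ring
    -- sval computations
    have hsvalU : sval α σ U
        = sval α σ W + ∑ x, σ x * (finrank ℂ (LinearMap.range (φ x)) : ℤ) := by
      show (∑ x, σ x * (finrank ℂ (U x) : ℤ))
        = (∑ x, σ x * (finrank ℂ (W x) : ℤ))
          + ∑ x, σ x * (finrank ℂ (LinearMap.range (φ x)) : ℤ)
      rw [← Finset.sum_add_distrib]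
      exact Finset.sum_congr rfl (fun x _ => by rw [hUrank x]; push_cast; ring)
    have hsvalK : sval α σ K
        = sval α σ W - ∑ x, σ x * (finrank ℂ (LinearMap.range (φ x)) : ℤ) := by
      show (∑ x, σ x * (finrank ℂ (K x) : ℤ))
        = (∑ x, σ x * (finrank ℂ (W x) : ℤ))
          - ∑ x, σ x * (finrank ℂ (LinearMap.range (φ x)) : ℤ)
      rw [sub_eq_add_neg, ← Finset.sum_neg_distrib, ← Finset.sum_add_distrib]
      exact Finset.sum_congr rfl (fun x _ => by rw [hKrank x]; push_cast; ring)
    have hle1 := hwit.2 U hUsub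
    have hle2 := hwit.2 K hKsub
    have hzero : (∑ x, σ x * (finrank ℂ (LinearMap.range (φ x)) : ℤ)) = 0 := by
      omega
    have hKwit : IsWitness hd tl α M σ K := by
      refine ⟨hKsub, fun W' hW' => ?_⟩
      have := hwit.2 W' hW'
      omega
    have hWK := hmin K hKwit
    intro x
    ext v
    obtain ⟨u, hu, huv⟩ := hWK x v.2
    have : u = v := Subtype.ext huv
    rw [← this]
    simpa using hu
  · -- Hom(W, V/W^⊥) = 0
    intro ψ hcomm
    set K : ∀ x, Submodule ℂ (Fin (α x) → ℂ) :=
      fun x => Submodule.map (W x).subtype (LinearMap.ker (ψ x)) with hK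
    set U : ∀ x, Submodule ℂ (Fin (α x) → ℂ) :=
      fun x => Submodule.comap (perp (hα x) (W (τ₀ x))).mkQ
        (LinearMap.range (ψ x)) with hU
    have hKsub : IsSubrep hd tl α M K := by
      intro a v hv
      obtain ⟨u, hu, rfl⟩ := hv
      refine ⟨⟨(M a).mulVec u, hwit.1 a u u.2⟩, ?_, rfl⟩
      simp only [SetLike.mem_coe, LinearMap.mem_ker] at hu ⊢
      rw [hcomm a u, hu, map_zero]
    have hUsub : IsSubrep hd tl α M U := by
      intro a v hv
      obtain ⟨w, hw⟩ := hv
      refine ⟨⟨(M a).mulVec w, hwit.1 a w w.2⟩, ?_⟩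
      show ψ (hd a) _ = (perp (hα (hd a)) (W (τ₀ (hd a)))).mkQ ((M a).mulVec v)
      rw [hcomm a w, hw, Submodule.mkQ_apply, Submodule.mkQ_apply]
      rfl
    have hKrank : ∀ x, (finrank ℂ (K x) : ℤ)
        = (finrank ℂ (W x) : ℤ) - (finrank ℂ (LinearMap.range (ψ x)) : ℤ) := by
      intro x
      have h1 : finrank ℂ (K x) = finrank ℂ (LinearMap.ker (ψ x)) :=
        Submodule.finrank_map_subtype_eq _ _
      have h2 := LinearMap.finrank_range_add_finrank_ker (ψ x)
      rw [h1]; omega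
    have hUrank : ∀ x, (finrank ℂ (U x) : ℤ)
        = (finrank ℂ (perp (hα x) (W (τ₀ x))) : ℤ)
          + (finrank ℂ (LinearMap.range (ψ x)) : ℤ) := by
      intro x
      have h2 : finrank ℂ (U x)
          = finrank ℂ (perp (hα x) (W (τ₀ x)))
            + finrank ℂ (LinearMap.range (ψ x)) :=
        finrank_comap_mkQ _ _
      rw [h2]; push_cast; ring
    have hsvalU : sval α σ U
        = sval α σ W + ∑ x, σ x * (finrank ℂ (LinearMap.range (ψ x)) : ℤ) := by
      show (∑ x, σ x * (finrank ℂ (U x) : ℤ)) = _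
      rw [← hsvalP]
      show _ = (∑ x, σ x * (finrank ℂ (perp (hα x) (W (τ₀ x))) : ℤ)) + _
      rw [← Finset.sum_add_distrib]
      exact Finset.sum_congr rfl (fun x _ => by rw [hUrank x]; push_cast; ring)
    have hsvalK : sval α σ K
        = sval α σ W - ∑ x, σ x * (finrank ℂ (LinearMap.range (ψ x)) : ℤ) := by
      show (∑ x, σ x * (finrank ℂ (K x) : ℤ))
        = (∑ x, σ x * (finrank ℂ (W x) : ℤ))
          - ∑ x, σ x * (finrank ℂ (LinearMap.range (ψ x)) : ℤ)
      rw [sub_eq_add_neg, ← Finset.sum_neg_distrib, ← Finset.sum_add_distrib]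
      exact Finset.sum_congr rfl (fun x _ => by rw [hKrank x]; push_cast; ring)
    have hle1 := hwit.2 U hUsub
    have hle2 := hwit.2 K hKsub
    have hzero : (∑ x, σ x * (finrank ℂ (LinearMap.range (ψ x)) : ℤ)) = 0 := by
      omega
    have hKwit : IsWitness hd tl α M σ K := by
      refine ⟨hKsub, fun W' hW' => ?_⟩
      have := hwit.2 W' hW'
      omega
    have hWK := hmin K hKwit
    intro x
    ext v
    obtain ⟨u, hu, huv⟩ := hWK x v.2
    have : u = v := Subtype.ext huv
    rw [← this]
    simpa using hu
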